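/- Let S be the flat bandlimited PSD with maximal frequency f_m > 0 and power σ² > 0, and let the sampling frequency satisfy 0 < f_s ≤ 2 f_m. Then the reconstruction NMSE equals ζ(f_s) = 1 − f_s/(2 f_m). -/

import Mathlib

open MeasureTheory

/-- The flat bandlimited PSD with maximal frequency `fm > 0` and power `σ² > 0`:
`S(f) = (σ²/(2 f_m)) · 1_{[−f_m, f_m]}(f)`. -/
noncomputable def flatPSD (fm σ2 : ℝ) : ℝ → ℝ :=
  Set.indicator (Set.Icc (-fm) fm) (fun _ => σ2 / (2 * fm))

/-- The minimal linear-reconstruction NMSE of uniform sampling at rate `fs`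
of a signal with power spectral density `S` (with the `0/0 = 0` convention,
which is Lean's division by zero). -/
noncomputable def nmse (S : ℝ → ℝ) (fs : ℝ) : ℝ :=
  1 - (1 / ∫ f : ℝ, S f) *
    ∑' k : ℤ, ∫ f in (-(fs / 2))..(fs / 2),
      (S (f - (k : ℝ) * fs)) ^ 2 / (∑' k' : ℤ, S (f - (k' : ℝ) * fs))

lemma flatPSD_nonneg (fm σ2 : ℝ) (hσ : 0 ≤ σ2) (hfm : 0 ≤ fm) (x : ℝ) :
    0 ≤ flatPSD fm σ2 x := by
  unfold flatPSD
  exact Set.indicator_nonneg (fun _ _ => by positivity) x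

lemma flatPSD_supp (fm σ2 fs : ℝ) (hfs : 0 < fs) (f : ℝ) :
    ∀ k ∉ Finset.Icc ⌈(f - fm) / fs⌉ ⌊(f + fm) / fs⌋,
      flatPSD fm σ2 (f - (k : ℝ) * fs) = 0 := by
  intro k hk
  unfold flatPSD
  rw [Set.indicator_apply_eq_zero]
  intro hmem
  exfalso
  apply hk
  obtain ⟨h1, h2⟩ := hmem
  rw [Finset.mem_Icc]
  constructor
  · rw [Int.ceil_le, div_le_iff₀ hfs]
    linarith
  · rw [Int.le_floor, le_div_iff₀ hfs]
    linarith

lemma flatPSD_summable (fm σ2 fs : ℝ) (hfs : 0 < fs) (f : ℝ) :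
    Summable (fun k : ℤ => flatPSD fm σ2 (f - (k : ℝ) * fs)) :=
  summable_of_ne_finset_zero (flatPSD_supp fm σ2 fs hfs f)

lemma flatPSD_sq (fm σ2 x : ℝ) :
    (flatPSD fm σ2 x) ^ 2 = (σ2 / (2 * fm)) * flatPSD fm σ2 x := by
  unfold flatPSD
  by_cases h : x ∈ Set.Icc (-fm) fm
  · simp [h]; ring
  · simp [h]

lemma flatPSD_key (fm σ2 fs : ℝ) (hfm : 0 < fm) (hσ : 0 < σ2)
    (hfs : 0 < fs) (hfs2 : fs ≤ 2 * fm) (f : ℝ)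
    (hf : f ∈ Set.Icc (-(fs / 2)) (fs / 2)) :
    ∑' k : ℤ, (flatPSD fm σ2 (f - (k : ℝ) * fs)) ^ 2 /
      (∑' k' : ℤ, flatPSD fm σ2 (f - (k' : ℝ) * fs)) = σ2 / (2 * fm) := by
  set c : ℝ := σ2 / (2 * fm) with hc
  have hcpos : 0 < c := by positivity
  set T : ℤ → ℝ := fun k => flatPSD fm σ2 (f - (k : ℝ) * fs) with hT
  have hTsum : Summable T := flatPSD_summable fm σ2 fs hfs f
  have hTnn : ∀ k, 0 ≤ T k := fun k =>
    flatPSD_nonneg fm σ2 hσ.le hfm.le _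
  have hT0 : T 0 = c := by
    have hmem : f ∈ Set.Icc (-fm) fm := by
      obtain ⟨h1, h2⟩ := hf
      constructor <;> [linarith; linarith]
    simp only [hT, Int.cast_zero, zero_mul, sub_zero]
    unfold flatPSD
    rw [Set.indicator_of_mem hmem]
  have hDle : T 0 ≤ ∑' k, T k := Summable.le_tsum hTsum 0 (fun j _ => hTnn j)
  have hDpos : 0 < ∑' k, T k := lt_of_lt_of_le (hT0 ▸ hcpos) hDle
  calc ∑' k : ℤ, T k ^ 2 / (∑' k', T k')
      = ∑' k : ℤ, c * T k / (∑' k', T k') := by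
        apply tsum_congr; intro k
        rw [hT, flatPSD_sq]
    _ = (∑' k : ℤ, c * T k) / (∑' k', T k') := tsum_div_const
    _ = c * (∑' k, T k) / (∑' k', T k') := by rw [tsum_mul_left]
    _ = c := by
        rw [mul_div_assoc, div_self hDpos.ne', mul_one]

/-- For the flat bandlimited PSD with maximal frequency `f_m` and power `σ²`,
sub-Nyquist uniform sampling at rate `0 < f_s ≤ 2 f_m` yields NMSE `1 − f_s/(2 f_m)`. -/
theorem nmse_flatPSD (fm σ2 fs : ℝ) (hfm : 0 < fm) (hσ : 0 < σ2)
    (hfs : 0 < fs) (hfs2 : fs ≤ 2 * fm) :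
    nmse (flatPSD fm σ2) fs = 1 - fs / (2 * fm) := by
  set c : ℝ := σ2 / (2 * fm) with hc
  have hcpos : 0 < c := by positivity
  set S : ℝ → ℝ := flatPSD fm σ2 with hS
  have hSnn : ∀ x, 0 ≤ S x := flatPSD_nonneg fm σ2 hσ.le hfm.le
  have hSmeas : Measurable S := measurable_const.indicator measurableSet_Icc
  have hTk : ∀ k : ℤ, Measurable fun f : ℝ => S (f - (k : ℝ) * fs) :=
    fun k => hSmeas.comp (measurable_id.sub_const _)
  -- measurability of the denominator
  have hD : Measurable fun f : ℝ => ∑' k' : ℤ, S (f - (k' : ℝ) * fs) := by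
    have heq : (fun f : ℝ => ∑' k' : ℤ, S (f - (k' : ℝ) * fs)) =
        fun f : ℝ => (∑' k' : ℤ, ENNReal.ofReal (S (f - (k' : ℝ) * fs))).toReal := by
      ext f
      rw [← ENNReal.ofReal_tsum_of_nonneg (fun k => hSnn _)
        (flatPSD_summable fm σ2 fs hfs f),
        ENNReal.toReal_ofReal (tsum_nonneg fun k => hSnn _)]
    rw [heq]
    exact (Measurable.ennreal_tsum fun k =>
      (hTk k).ennreal_ofReal).ennreal_toReal
  set H : ℤ → ℝ → ℝ := fun k f =>
    (S (f - (k : ℝ) * fs)) ^ 2 / (∑' k' : ℤ, S (f - (k' : ℝ) * fs)) with hH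
  have hHmeas : ∀ k, Measurable (H k) := fun k => ((hTk k).pow_const 2).div hD
  have hHnn : ∀ k f, 0 ≤ H k f := fun k f =>
    div_nonneg (sq_nonneg _) (tsum_nonneg fun k' => hSnn _)
  have hHsupp : ∀ f : ℝ, ∀ k ∉ Finset.Icc ⌈(f - fm) / fs⌉ ⌊(f + fm) / fs⌋,
      H k f = 0 := by
    intro f k hk
    have h0 : S (f - (k : ℝ) * fs) = 0 := by
      rw [hS]; exact flatPSD_supp fm σ2 fs hfs f k hk
    simp [hH, h0]
  have hHsumm : ∀ f : ℝ, Summable fun k : ℤ => H k f := fun f =>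
    summable_of_ne_finset_zero (hHsupp f)
  have hle : -(fs / 2) ≤ fs / 2 := by linarith
  set I : Set ℝ := Set.Ioc (-(fs / 2)) (fs / 2) with hI
  have hIsub : I ⊆ Set.Icc (-(fs / 2)) (fs / 2) := Set.Ioc_subset_Icc_self
  -- key pointwise identity on I
  have hkey : ∀ f ∈ I, ∑' k : ℤ, H k f = c := fun f hf =>
    flatPSD_key fm σ2 fs hfm hσ hfs hfs2 f (hIsub hf)
  -- total power
  have hint : ∫ f : ℝ, S f = σ2 := by
    rw [hS]
    unfold flatPSD
    rw [integral_indicator_const _ measurableSet_Icc, measureReal_def, Real.volume_Icc]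
    rw [show fm - -fm = 2 * fm by ring, ENNReal.toReal_ofReal (by linarith)]
    rw [smul_eq_mul]
    field_simp
  -- the finiteness condition for integral_tsum
  have hfin : ∑' k : ℤ, ∫⁻ f, ‖H k f‖₊ ∂(volume.restrict I) ≠ ⊤ := by
    rw [← lintegral_tsum (fun k => ((hHmeas k).nnnorm.coe_nnreal_ennreal).aemeasurable)]
    have hpt : ∀ f ∈ I, (∑' k : ℤ, (‖H k f‖₊ : ENNReal)) = ENNReal.ofReal c := by
      intro f hf
      have : ∀ k : ℤ, (‖H k f‖₊ : ENNReal) = ENNReal.ofReal (H k f) := fun k =>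
        Real.enorm_eq_ofReal (hHnn k f)
      simp_rw [this]
      rw [← ENNReal.ofReal_tsum_of_nonneg (fun k => hHnn k f) (hHsumm f)]
      rw [hkey f hf]
    have : ∫⁻ f, (∑' k : ℤ, (‖H k f‖₊ : ENNReal)) ∂(volume.restrict I) =
        ∫⁻ _, ENNReal.ofReal c ∂(volume.restrict I) := by
      apply lintegral_congr_ae
      have hImeas : MeasurableSet I := measurableSet_Ioc
      filter_upwards [ae_restrict_mem hImeas] with f hf using hpt f hf
    rw [this, lintegral_const, Measure.restrict_apply_univ]
    exact (ENNReal.mul_lt_top ENNReal.ofReal_lt_top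
      (measure_Ioc_lt_top)).ne
  -- main computation
  have hswap : (∑' k : ℤ, ∫ f in (-(fs / 2))..(fs / 2),
      (S (f - (k : ℝ) * fs)) ^ 2 / (∑' k' : ℤ, S (f - (k' : ℝ) * fs))) = fs * c := by
    show (∑' k : ℤ, ∫ f in (-(fs / 2))..(fs / 2), H k f) = fs * c
    have h1 : ∀ k : ℤ, ∫ f in (-(fs / 2))..(fs / 2), H k f = ∫ f in I, H k f :=
      fun k => intervalIntegral.integral_of_le hle
    simp_rw [h1]
    rw [← integral_tsum (fun k => (hHmeas k).aestronglyMeasurable) hfin]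
    rw [setIntegral_congr_fun measurableSet_Ioc (fun f hf => hkey f hf)]
    rw [setIntegral_const, measureReal_def, Real.volume_Ioc,
      show fs / 2 - -(fs / 2) = fs by ring,
      ENNReal.toReal_ofReal hfs.le, smul_eq_mul]
  unfold nmse
  rw [hint, hswap, hc]
  field_simp
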